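/- Let r ≥ 0, n ≥ 1, and let ν be a finite Borel measure on ℝ^d with support contained in the closed ball B_r = [-r,r]^d (for the sup norm) and total mass |ν| ≥ 1/n. Then there exists a Borel subset A of B_r such that ν(A) ≥ 1/n and Diam(A) ≤ 4r(n|ν|)^{-1/d}. -/

import Mathlib

set_option maxHeartbeats 1000000

open MeasureTheory Metric
open scoped ENNReal NNReal

lemma exists_subcube_index (m : ℕ) (hm : 1 ≤ m) (r y : ℝ) (hr : 0 ≤ r) (hy : |y| ≤ r) :
    ∃ j : Fin m, -r + (j : ℕ) * (2 * r / m) ≤ y ∧ y ≤ -r + ((j : ℕ) + 1) * (2 * r / m) := by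
  have hy1 : -r ≤ y := (abs_le.1 hy).1
  have hy2 : y ≤ r := (abs_le.1 hy).2
  rcases eq_or_lt_of_le hr with h0 | h0
  · refine ⟨⟨0, hm⟩, ?_, ?_⟩ <;> simp [← h0] <;> nlinarith
  · set s : ℝ := 2 * r / m with hs_def
    have hs : 0 < s := by positivity
    set j₀ := ⌊(y + r) / s⌋₊ with hj₀
    have hfl : (j₀ : ℝ) ≤ (y + r) / s := Nat.floor_le (div_nonneg (by linarith) hs.le)
    by_cases hcase : j₀ < m
    · refine ⟨⟨j₀, hcase⟩, ?_, ?_⟩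
      · have h1 : (j₀ : ℝ) * s ≤ y + r := (le_div_iff₀ hs).1 hfl
        simpa using by linarith
      · have h2 : (y + r) / s < j₀ + 1 := Nat.lt_floor_add_one _
        have h3 : y + r < ((j₀ : ℝ) + 1) * s := (div_lt_iff₀ hs).1 h2
        simpa using by linarith
    · have hmj : m - 1 ≤ j₀ := by omega
      have hcast : ((m - 1 : ℕ) : ℝ) = (m : ℝ) - 1 := by
        push_cast [Nat.cast_sub hm]; ring
      have hms : (m : ℝ) * s = 2 * r := by
        have hm0 : (m : ℝ) ≠ 0 := by exact_mod_cast (by omega : m ≠ 0)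
        rw [hs_def]; field_simp
      refine ⟨⟨m - 1, by omega⟩, ?_, ?_⟩
      · have h1 : ((m - 1 : ℕ) : ℝ) ≤ (y + r) / s := le_trans (by exact_mod_cast hmj) hfl
        have h2 : ((m - 1 : ℕ) : ℝ) * s ≤ y + r := (le_div_iff₀ hs).1 h1
        simpa using by linarith
      · have heq : -r + (((m - 1 : ℕ) : ℝ) + 1) * s = r := by
          rw [hcast, show ((m : ℝ) - 1 + 1) * s = (m : ℝ) * s by ring, hms]; ring
        simpa using by linarith [heq]

theorem uniform_mass_cube (d n : ℕ) (hd : 1 ≤ d) (hn : 1 ≤ n) (r : ℝ) (hr : 0 ≤ r)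
    (ν : Measure (Fin d → ℝ)) [IsFiniteMeasure ν]
    (hsupp : ν (closedBall 0 r)ᶜ = 0)
    (hmass : (n : ℝ≥0∞)⁻¹ ≤ ν Set.univ) :
    ∃ A : Set (Fin d → ℝ), MeasurableSet A ∧ A ⊆ closedBall 0 r ∧
      (n : ℝ≥0∞)⁻¹ ≤ ν A ∧
      Metric.diam A ≤ 4 * r * ((n : ℝ) * (ν Set.univ).toReal) ^ (-(1 : ℝ) / d) := by
  have hνfin : ν Set.univ ≠ ∞ := measure_ne_top ν _
  have hn0 : (n : ℝ) ≠ 0 := by positivity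
  have hd0 : (d : ℝ) ≠ 0 := by positivity
  set t : ℝ := (n : ℝ) * (ν Set.univ).toReal with ht_def
  have ht1 : 1 ≤ t := by
    have h1 : ((n : ℝ≥0∞)⁻¹).toReal ≤ (ν Set.univ).toReal :=
      ENNReal.toReal_mono hνfin hmass
    have h2 : ((n : ℝ≥0∞)⁻¹).toReal = (n : ℝ)⁻¹ := by simp
    rw [h2] at h1
    rw [ht_def]
    calc (1 : ℝ) = (n : ℝ) * (n : ℝ)⁻¹ := by field_simp
    _ ≤ (n : ℝ) * (ν Set.univ).toReal := by
        apply mul_le_mul_of_nonneg_left h1 (by positivity)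
  have ht0 : (0 : ℝ) ≤ t := by linarith
  set s₀ : ℝ := t ^ ((1 : ℝ) / d) with hs₀_def
  have hs₀1 : 1 ≤ s₀ := Real.one_le_rpow ht1 (by positivity)
  have hs₀pos : 0 < s₀ := by linarith
  set m : ℕ := ⌊s₀⌋₊ with hm_def
  have hm1 : 1 ≤ m := Nat.le_floor (by exact_mod_cast hs₀1)
  have hmpos : (0 : ℝ) < m := by exact_mod_cast hm1
  set s : ℝ := 2 * r / m with hs_def
  have hs0 : 0 ≤ s := by positivity
  have hms : (m : ℝ) * s = 2 * r := by have hm0 := hmpos.ne'; rw [hs_def]; field_simp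
  -- the subcubes
  set C : (Fin d → Fin m) → Set (Fin d → ℝ) := fun k =>
    Set.univ.pi fun i => Set.Icc (-r + ((k i : ℕ) : ℝ) * s) (-r + (((k i : ℕ) : ℝ) + 1) * s)
    with hC_def
  have hCmeas : ∀ k, MeasurableSet (C k) := fun k =>
    MeasurableSet.univ_pi fun i => measurableSet_Icc
  have hCsub : ∀ k, C k ⊆ closedBall 0 r := by
    intro k x hx
    rw [mem_closedBall, dist_pi_le_iff hr]
    intro i
    have h := hx i trivial
    simp only [Set.mem_Icc] at h
    have hki : ((k i : ℕ) : ℝ) + 1 ≤ m := by exact_mod_cast (k i).isLt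
    have hub : (((k i : ℕ) : ℝ) + 1) * s ≤ (m : ℝ) * s :=
      mul_le_mul_of_nonneg_right hki hs0
    have hlb : (0 : ℝ) ≤ ((k i : ℕ) : ℝ) * s := by positivity
    simp only [Pi.zero_apply, Real.dist_eq, sub_zero]
    rw [abs_le]
    constructor <;> nlinarith [h.1, h.2]
  have hCdiam : ∀ k, Metric.diam (C k) ≤ s := by
    intro k
    apply Metric.diam_le_of_forall_dist_le hs0
    intro x hx y hy
    rw [dist_pi_le_iff hs0]
    intro i
    have hxi := hx i trivial
    have hyi := hy i trivial
    have h := Real.dist_le_of_mem_Icc hxi hyi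
    have he : (-r + (((k i : ℕ) : ℝ) + 1) * s) - (-r + ((k i : ℕ) : ℝ) * s) = s := by ring
    linarith [h, he.le]
  -- cover
  have hcover : closedBall (0 : Fin d → ℝ) r ⊆ ⋃ k : Fin d → Fin m, C k := by
    intro x hx
    have hx' : ∀ i, |x i| ≤ r := by
      intro i
      have h := (dist_pi_le_iff hr).1 (mem_closedBall.1 hx) i
      simpa [Real.dist_eq] using h
    have hchoice : ∀ i, ∃ j : Fin m,
        -r + (j : ℕ) * s ≤ x i ∧ x i ≤ -r + ((j : ℕ) + 1) * s := fun i =>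
      exists_subcube_index m hm1 r (x i) hr (hx' i)
    choose k hk1 hk2 using hchoice
    exact Set.mem_iUnion.2 ⟨k, fun i _ => ⟨hk1 i, hk2 i⟩⟩
  -- arithmetic: m^d ≤ t
  have hmdt : ((m : ℝ)) ^ d ≤ t := by
    have h1 : (m : ℝ) ≤ s₀ := Nat.floor_le hs₀pos.le
    calc ((m : ℝ)) ^ d ≤ s₀ ^ d := pow_le_pow_left₀ hmpos.le h1 d
    _ = t := by
        rw [hs₀_def, ← Real.rpow_natCast (t ^ ((1:ℝ)/d)) d, ← Real.rpow_mul ht0,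
          one_div, inv_mul_cancel₀ hd0, Real.rpow_one]
  -- ENNReal version
  have hnE0 : (n : ℝ≥0∞) ≠ 0 := by exact_mod_cast Nat.cast_ne_zero.2 (by omega)
  have hENN : (m : ℝ≥0∞) ^ d ≤ (n : ℝ≥0∞) * ν Set.univ := by
    rw [← ENNReal.toReal_le_toReal (ENNReal.pow_ne_top (ENNReal.natCast_ne_top m))
      (ENNReal.mul_ne_top (ENNReal.natCast_ne_top n) hνfin)]
    simpa [ENNReal.toReal_mul, ENNReal.toReal_pow] using hmdt
  have hle : (m : ℝ≥0∞) ^ d * (n : ℝ≥0∞)⁻¹ ≤ ν Set.univ := by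
    calc (m : ℝ≥0∞) ^ d * (n : ℝ≥0∞)⁻¹
        ≤ ((n : ℝ≥0∞) * ν Set.univ) * (n : ℝ≥0∞)⁻¹ := mul_le_mul_left hENN _
    _ = ν Set.univ := by
        rw [mul_comm (n : ℝ≥0∞), mul_assoc, ENNReal.mul_inv_cancel hnE0 (by simp), mul_one]
  -- pigeonhole
  have key : ∃ k : Fin d → Fin m, (n : ℝ≥0∞)⁻¹ ≤ ν (C k) := by
    by_contra h
    push_neg at h
    have hνball : ν Set.univ = ν (closedBall 0 r) := by
      have h2 := measure_add_measure_compl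
        (measurableSet_closedBall : MeasurableSet (closedBall (0 : Fin d → ℝ) r)) (μ := ν)
      rw [hsupp, add_zero] at h2
      exact h2.symm
    have hsum : ν Set.univ ≤ ∑ k : Fin d → Fin m, ν (C k) := by
      calc ν Set.univ = ν (closedBall 0 r) := hνball
      _ ≤ ν (⋃ k : Fin d → Fin m, C k) := measure_mono hcover
      _ ≤ ∑ k : Fin d → Fin m, ν (C k) := measure_iUnion_fintype_le _ _
    haveI : Nonempty (Fin m) := ⟨⟨0, hm1⟩⟩
    have hne : (Finset.univ : Finset (Fin d → Fin m)).Nonempty := Finset.univ_nonempty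
    have hlt : ∑ k : Fin d → Fin m, ν (C k) < ∑ _k : Fin d → Fin m, (n : ℝ≥0∞)⁻¹ :=
      ENNReal.sum_lt_sum_of_nonempty hne fun k _ => h k
    have hconst : ∑ _k : Fin d → Fin m, (n : ℝ≥0∞)⁻¹
        = (m : ℝ≥0∞) ^ d * (n : ℝ≥0∞)⁻¹ := by
      rw [Finset.sum_const, nsmul_eq_mul]
      congr 1
      simp [Fintype.card_fun]
    rw [hconst] at hlt
    exact absurd (lt_of_le_of_lt hsum (lt_of_lt_of_le hlt hle)) (lt_irrefl _)
  obtain ⟨k, hk⟩ := key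
  refine ⟨C k, hCmeas k, hCsub k, hk, ?_⟩
  -- diameter bound
  have hrpow : t ^ (-(1 : ℝ) / d) = s₀⁻¹ := by
    rw [neg_div, Real.rpow_neg ht0, hs₀_def]
  have hfloor2 : s₀ ≤ 2 * m := by
    have h1 : s₀ < m + 1 := Nat.lt_floor_add_one s₀
    have : (1 : ℝ) ≤ m := by exact_mod_cast hm1
    linarith
  have hsbound : s ≤ 4 * r * s₀⁻¹ := by
    have h2 : 2 * r / (m : ℝ) ≤ 4 * r / s₀ := by
      rw [div_le_div_iff₀ hmpos hs₀pos]; nlinarith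
    calc s = 2 * r / (m : ℝ) := hs_def
    _ ≤ 4 * r / s₀ := h2
    _ = 4 * r * s₀⁻¹ := div_eq_mul_inv _ _
  calc Metric.diam (C k) ≤ s := hCdiam k
  _ ≤ 4 * r * s₀⁻¹ := hsbound
  _ = 4 * r * t ^ (-(1 : ℝ) / d) := by rw [hrpow]
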